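/- arXiv:0709.3082 — 2 statements merged into one kernel-verified Lean document; each statement's English description precedes it below -/
import Mathlib

section
/- Under the hypotheses of the previous statement, if in addition for every y ∈ ℝ^d and b > 0, sup_{|h| ≤ b} |A(x,h) − A(y,h)| → 0 as x → y, then Lf is continuous on ℝ^d. -/
open MeasureTheory

/-- Monotonicity of `rpow` with nonpositive exponent. -/
lemma my_rpow_anti {q : ℝ} (hq0 : q ≤ 0) {a b : ℝ} (ha : 0 < a) (hab : a ≤ b) :
    b ^ q ≤ a ^ q := by
  rcases eq_or_lt_of_le hq0 with h | h
  · simp [h]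
  · exact (Real.rpow_le_rpow_iff_of_neg (lt_of_lt_of_le ha hab) ha h).2 hab

/-- `‖h‖ ^ q` is integrable on the closed unit ball when `-d < q ≤ 0`. -/
lemma my_integrableOn_ball (d : ℕ) (q : ℝ) (hq : -(d : ℝ) < q) (hq0 : q ≤ 0) :
    IntegrableOn (fun h : EuclideanSpace ℝ (Fin d) => ‖h‖ ^ q)
      (Metric.closedBall 0 1) := by
  have base : (0:ℝ) < 1/2 := by norm_num
  constructor
  · exact (measurable_norm.pow_const q).aestronglyMeasurable
  · have hnn : ∀ h : EuclideanSpace ℝ (Fin d),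
        (‖‖h‖ ^ q‖ₑ : ENNReal) = ENNReal.ofReal (‖h‖ ^ q) := fun h => by
      rw [← ofReal_norm, Real.norm_eq_abs,
        abs_of_nonneg (Real.rpow_nonneg (norm_nonneg _) _)]
    rw [HasFiniteIntegral]
    simp only [hnn]
    set s : ℕ → Set (EuclideanSpace ℝ (Fin d)) := fun n =>
      (fun h : EuclideanSpace ℝ (Fin d) => ‖h‖) ⁻¹' Set.Ioc ((1/2 : ℝ) ^ (n+1)) ((1/2 : ℝ) ^ n)
      with hs_def
    have hsub : Metric.closedBall (0 : EuclideanSpace ℝ (Fin d)) 1 ⊆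
        {0} ∪ ⋃ n, s n := by
      intro h hh
      rcases eq_or_ne h 0 with h0 | h0
      · exact Or.inl h0
      · right
        have hpos : 0 < ‖h‖ := norm_pos_iff.2 h0
        have hex : ∃ n : ℕ, (1/2 : ℝ) ^ n < ‖h‖ := exists_pow_lt_of_lt_one hpos (by norm_num)
        have hspec := Nat.find_spec hex
        have hne : Nat.find hex ≠ 0 := by
          intro h0'
          rw [h0', pow_zero] at hspec
          have hball := Metric.mem_closedBall.1 hh
          rw [dist_zero_right] at hball
          exact absurd hball (not_le.2 hspec)
        obtain ⟨m, hm⟩ := Nat.exists_eq_succ_of_ne_zero hne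
        refine Set.mem_iUnion.2 ⟨m, ?_⟩
        constructor
        · rw [← Nat.succ_eq_add_one, ← hm]; exact hspec
        · exact not_lt.1 (Nat.find_min hex (by omega))
    have hs_meas : ∀ n, MeasurableSet (s n) := fun n =>
      measurable_norm measurableSet_Ioc
    set V := volume (Metric.closedBall (0 : EuclideanSpace ℝ (Fin d)) 1) with hV
    have hVfin : V < ⊤ := measure_closedBall_lt_top
    set r : ENNReal := ENNReal.ofReal ((1/2 : ℝ) ^ ((d : ℝ) + q)) with hr
    have hrlt : r < 1 := by
      rw [hr, ← ENNReal.ofReal_one]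
      exact (ENNReal.ofReal_lt_ofReal_iff one_pos).2
        (Real.rpow_lt_one (by norm_num) (by norm_num) (by linarith))
    have key : ∀ n : ℕ,
        ENNReal.ofReal (((1/2 : ℝ) ^ (n+1)) ^ q) *
          (ENNReal.ofReal (((1/2 : ℝ) ^ n) ^ (d : ℕ)) * V)
        = (ENNReal.ofReal ((1/2 : ℝ) ^ q) * V) * r ^ n := by
      intro n
      have ereal : ((1/2 : ℝ) ^ (n+1)) ^ q * ((1/2 : ℝ) ^ n) ^ (d : ℕ)
          = (1/2 : ℝ) ^ q * ((1/2 : ℝ) ^ ((d : ℝ) + q)) ^ n := by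
        have e1 : ((1/2 : ℝ) ^ (n+1)) ^ q = (1/2 : ℝ) ^ (((n : ℝ)+1) * q) := by
          rw [← Real.rpow_natCast (1/2 : ℝ) (n+1), ← Real.rpow_mul base.le]
          push_cast; ring_nf
        have e2 : ((1/2 : ℝ) ^ n) ^ (d : ℕ) = (1/2 : ℝ) ^ ((n : ℝ) * (d : ℝ)) := by
          rw [← pow_mul, ← Real.rpow_natCast (1/2 : ℝ) (n * d)]
          push_cast; ring_nf
        have e3 : ((1/2 : ℝ) ^ ((d : ℝ) + q)) ^ n = (1/2 : ℝ) ^ (((d : ℝ) + q) * (n : ℝ)) := by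
          rw [← Real.rpow_natCast ((1/2 : ℝ) ^ ((d : ℝ) + q)) n, ← Real.rpow_mul base.le]
        rw [e1, e2, e3, ← Real.rpow_add base, ← Real.rpow_add base]
        congr 1; ring
      calc ENNReal.ofReal (((1/2 : ℝ) ^ (n+1)) ^ q) *
              (ENNReal.ofReal (((1/2 : ℝ) ^ n) ^ (d : ℕ)) * V)
          = ENNReal.ofReal (((1/2 : ℝ) ^ (n+1)) ^ q * ((1/2 : ℝ) ^ n) ^ (d : ℕ)) * V := by
            rw [ENNReal.ofReal_mul (by positivity)]; ring
        _ = ENNReal.ofReal ((1/2 : ℝ) ^ q * ((1/2 : ℝ) ^ ((d : ℝ) + q)) ^ n) * V := by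
            rw [ereal]
        _ = (ENNReal.ofReal ((1/2 : ℝ) ^ q) * V) * r ^ n := by
            rw [ENNReal.ofReal_mul (by positivity), ENNReal.ofReal_pow (by positivity), hr]
            ring
    calc ∫⁻ h in Metric.closedBall 0 1, ENNReal.ofReal (‖h‖ ^ q)
        ≤ ∫⁻ h in ({0} ∪ ⋃ n, s n), ENNReal.ofReal (‖h‖ ^ q) :=
          lintegral_mono_set hsub
      _ ≤ (∫⁻ h in {(0 : EuclideanSpace ℝ (Fin d))}, ENNReal.ofReal (‖h‖ ^ q)) +
            ∫⁻ h in ⋃ n, s n, ENNReal.ofReal (‖h‖ ^ q) := lintegral_union_le _ _ _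
      _ < ⊤ := by
          refine ENNReal.add_lt_top.2 ⟨?_, ?_⟩
          · rw [lintegral_singleton]
            refine ENNReal.mul_lt_top ENNReal.ofReal_lt_top ?_
            exact lt_of_le_of_lt (measure_mono (Set.singleton_subset_iff.2
              (Metric.mem_closedBall_self zero_le_one))) hVfin
          · refine lt_of_le_of_lt (lintegral_iUnion_le _ _) ?_
            have bound_n : ∀ n : ℕ, ∫⁻ h in s n, ENNReal.ofReal (‖h‖ ^ q) ≤
                (ENNReal.ofReal ((1/2 : ℝ) ^ q) * V) * r ^ n := by
              intro n
              calc ∫⁻ h in s n, ENNReal.ofReal (‖h‖ ^ q)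
                  ≤ ∫⁻ _ in s n, ENNReal.ofReal (((1/2 : ℝ) ^ (n+1)) ^ q) :=
                    setLIntegral_mono measurable_const (fun h hh =>
                      ENNReal.ofReal_le_ofReal
                        (my_rpow_anti hq0 (pow_pos base _) (le_of_lt hh.1)))
                _ = ENNReal.ofReal (((1/2 : ℝ) ^ (n+1)) ^ q) * volume (s n) :=
                    setLIntegral_const _ _
                _ ≤ ENNReal.ofReal (((1/2 : ℝ) ^ (n+1)) ^ q) *
                      (ENNReal.ofReal (((1/2 : ℝ) ^ n) ^ (d : ℕ)) * V) := by
                    refine mul_le_mul_right ?_ _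
                    have : s n ⊆ Metric.closedBall 0 ((1/2 : ℝ) ^ n) := fun h hh => by
                      rw [Metric.mem_closedBall, dist_zero_right]; exact hh.2
                    refine le_trans (measure_mono this) ?_
                    rw [hV, Measure.addHaar_closedBall' volume _ (pow_nonneg base.le n),
                      finrank_euclideanSpace_fin]
                _ = (ENNReal.ofReal ((1/2 : ℝ) ^ q) * V) * r ^ n := key n
            refine lt_of_le_of_lt (ENNReal.tsum_le_tsum bound_n) ?_
            rw [ENNReal.tsum_mul_left, ENNReal.tsum_geometric]
            refine ENNReal.mul_lt_top (ENNReal.mul_lt_top ENNReal.ofReal_lt_top hVfin) ?_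
            rw [ENNReal.inv_lt_top]
            exact tsub_pos_of_lt hrlt


/-- `‖h‖ ^ (-p)` is integrable outside the closed unit ball when `p > d`. -/
lemma my_integrableOn_compl (d : ℕ) (p : ℝ) (hp : (d : ℝ) < p) :
    IntegrableOn (fun h : EuclideanSpace ℝ (Fin d) => ‖h‖ ^ (-p))
      (Metric.closedBall 0 1)ᶜ := by
  have hp0 : 0 ≤ p := le_trans (Nat.cast_nonneg d) hp.le
  have base : Integrable (fun h : EuclideanSpace ℝ (Fin d) => (2:ℝ)^p * (1+‖h‖)^(-p)) :=
    (integrable_one_add_norm (by rw [finrank_euclideanSpace_fin]; exact hp)).const_mul _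
  refine Integrable.mono' base.integrableOn
    ((measurable_norm.pow_const _).aestronglyMeasurable) ?_
  refine (ae_restrict_iff' measurableSet_closedBall.compl).2
    (Filter.Eventually.of_forall fun h hh => ?_)
  have h1 : (1:ℝ) < ‖h‖ := by
    simp only [Set.mem_compl_iff, Metric.mem_closedBall, dist_zero_right, not_le] at hh
    exact hh
  have hpos : (0:ℝ) < ‖h‖ := lt_trans one_pos h1
  rw [Real.norm_eq_abs, abs_of_nonneg (Real.rpow_nonneg (norm_nonneg _) _),
    Real.rpow_neg (norm_nonneg _), Real.rpow_neg (by positivity)]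
  have e1 : (1+‖h‖)^p ≤ (2:ℝ)^p * ‖h‖^p := by
    rw [← Real.mul_rpow (by norm_num) (norm_nonneg _)]
    exact Real.rpow_le_rpow (by positivity) (by linarith) hp0
  have hA : (0:ℝ) < ‖h‖^p := Real.rpow_pos_of_pos hpos _
  have hB : (0:ℝ) < (1+‖h‖)^p := Real.rpow_pos_of_pos (by positivity) _
  have h2p : (0:ℝ) < (2:ℝ)^p := Real.rpow_pos_of_pos (by norm_num) _
  calc (‖h‖^p)⁻¹ ≤ ((1+‖h‖)^p / (2:ℝ)^p)⁻¹ := by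
        apply inv_anti₀ (by positivity)
        rw [div_le_iff₀ h2p]
        nlinarith [e1]
    _ = (2:ℝ)^p * ((1+‖h‖)^p)⁻¹ := by
        rw [inv_div, div_eq_mul_inv, mul_comm]

/-- Second-order Taylor bound. -/
lemma my_taylor {E : Type*} [NormedAddCommGroup E] [NormedSpace ℝ E]
    (f : E → ℝ) (hf : ContDiff ℝ 2 f) (K : ℝ)
    (hf2 : ∀ x, ‖fderiv ℝ (fderiv ℝ f) x‖ ≤ K) (x h : E) :
    |f (x + h) - f x - fderiv ℝ f x h| ≤ K * ‖h‖ ^ 2 := by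
  have hK : 0 ≤ K := le_trans (norm_nonneg (fderiv ℝ (fderiv ℝ f) x)) (hf2 x)
  have hf' : ContDiff ℝ 1 (fderiv ℝ f) := by
    apply hf.fderiv_right (m := 1)
    norm_num
  have hlip : ∀ z : E, ‖fderiv ℝ f z - fderiv ℝ f x‖ ≤ K * ‖z - x‖ := fun z =>
    convex_univ.norm_image_sub_le_of_norm_fderiv_le
      (fun y _ => (hf'.differentiable one_ne_zero) y)
      (fun y _ => hf2 y) (Set.mem_univ x) (Set.mem_univ z)
  have main := (convex_closedBall x ‖h‖).norm_image_sub_le_of_norm_fderiv_le'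
    (fun z _ => (hf.differentiable two_ne_zero).differentiableAt)
    (fun z hz => le_trans (hlip z) (mul_le_mul_of_nonneg_left (by
      rw [← dist_eq_norm]; exact Metric.mem_closedBall.1 hz) hK))
    (Metric.mem_closedBall_self (norm_nonneg _))
    (by rw [Metric.mem_closedBall, dist_eq_norm, add_sub_cancel_left])
  rw [add_sub_cancel_left] at main
  rw [← Real.norm_eq_abs, pow_two, ← mul_assoc]
  exact main

/-- Proposition 3.3: if in addition `A(x,h)` is continuous in `x` uniformly over
`|h| ≤ b` for each `b > 0`, then `Lf` is continuous on `ℝ^d`. -/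
theorem stmt13 (d : ℕ) (hd : 1 ≤ d) (α : ℝ) (hα : α ∈ Set.Ico (1 : ℝ) 2)
    (c₁ c₂ : ℝ) (hc₁ : 0 < c₁)
    (A : EuclideanSpace ℝ (Fin d) → EuclideanSpace ℝ (Fin d) → ℝ)
    (hAmeas : Measurable (Function.uncurry A))
    (hAbdd : ∀ x h, A x h ∈ Set.Icc c₁ c₂)
    (hAcont : ∀ y : EuclideanSpace ℝ (Fin d), ∀ b : ℝ, 0 < b → ∀ ε : ℝ, 0 < ε →
      ∃ δ : ℝ, 0 < δ ∧ ∀ x, ‖x - y‖ < δ → ∀ h, ‖h‖ ≤ b → |A x h - A y h| < ε)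
    (f : EuclideanSpace ℝ (Fin d) → ℝ) (hf : ContDiff ℝ 2 f)
    (K : ℝ) (hf0 : ∀ x, |f x| ≤ K) (hf1 : ∀ x, ‖fderiv ℝ f x‖ ≤ K)
    (hf2 : ∀ x, ‖fderiv ℝ (fderiv ℝ f) x‖ ≤ K) :
    Continuous (fun x : EuclideanSpace ℝ (Fin d) =>
      ∫ h : EuclideanSpace ℝ (Fin d),
        (f (x + h) - f x - (if ‖h‖ ≤ 1 then fderiv ℝ f x h else 0)) *
          (A x h / ‖h‖ ^ ((d : ℝ) + α))) := by
  obtain ⟨hα1, hα2⟩ := hα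
  have hd1 : (1:ℝ) ≤ (d:ℝ) := by exact_mod_cast hd
  have hK : 0 ≤ K := le_trans (abs_nonneg _) (hf0 0)
  have hc₂ : 0 < c₂ := lt_of_lt_of_le hc₁ (le_trans (hAbdd 0 0).1 (hAbdd 0 0).2)
  set p : ℝ := (d:ℝ) + α with hpdef
  have hpd : (d:ℝ) < p := by rw [hpdef]; linarith
  have hppos : 0 < p := by rw [hpdef]; linarith
  set q : ℝ := 2 - p with hqdef
  have hq : -(d:ℝ) < q := by rw [hqdef, hpdef]; linarith
  have hq0 : q ≤ 0 := by rw [hqdef, hpdef]; linarith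
  set bound : EuclideanSpace ℝ (Fin d) → ℝ := fun h =>
    if ‖h‖ ≤ 1 then K * c₂ * ‖h‖ ^ q else 2*K*c₂ * ‖h‖ ^ (-p) with hbound
  have bound_int : Integrable bound := by
    rw [← integrableOn_univ,
      ← Set.union_compl_self (Metric.closedBall (0 : EuclideanSpace ℝ (Fin d)) 1)]
    refine IntegrableOn.union ?_ ?_
    · refine IntegrableOn.congr_fun ((my_integrableOn_ball d q hq hq0).const_mul (K*c₂))
        (fun h hh => ?_) measurableSet_closedBall
      have hh1 : ‖h‖ ≤ 1 := by rwa [Metric.mem_closedBall, dist_zero_right] at hh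
      simp [hbound, hh1]
    · refine IntegrableOn.congr_fun ((my_integrableOn_compl d p hpd).const_mul (2*K*c₂))
        (fun h hh => ?_) measurableSet_closedBall.compl
      have hh1 : ¬ ‖h‖ ≤ 1 := by
        simp only [Set.mem_compl_iff, Metric.mem_closedBall, dist_zero_right, not_le] at hh
        exact not_le.2 hh
      simp [hbound, hh1]
  rw [continuous_iff_continuousAt]
  intro x₀
  apply continuousAt_of_dominated (bound := bound)
  · apply Filter.Eventually.of_forall
    intro x
    have m1 : Measurable fun h : EuclideanSpace ℝ (Fin d) =>
        f (x + h) - f x - (if ‖h‖ ≤ 1 then fderiv ℝ f x h else 0) := by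
      refine Measurable.sub (Measurable.sub ?_ measurable_const) ?_
      · exact (hf.continuous.comp (continuous_const.add continuous_id)).measurable
      · exact Measurable.ite (measurableSet_le measurable_norm measurable_const)
          (fderiv ℝ f x).continuous.measurable measurable_const
    have m2 : Measurable fun h : EuclideanSpace ℝ (Fin d) => A x h / ‖h‖ ^ p :=
      (hAmeas.comp measurable_prodMk_left).div (measurable_norm.pow_const p)
    exact (m1.mul m2).aestronglyMeasurable
  · apply Filter.Eventually.of_forall
    intro x
    apply ae_of_all
    intro h
    have hb2 : ∀ hpos : (0:ℝ) < ‖h‖, |A x h / ‖h‖ ^ p| ≤ c₂ / ‖h‖ ^ p := by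
      intro hpos
      rw [abs_div, abs_of_nonneg (le_of_lt (lt_of_lt_of_le hc₁ (hAbdd x h).1)),
        abs_of_nonneg (Real.rpow_nonneg (norm_nonneg _) _)]
      gcongr
      exact (hAbdd x h).2
    by_cases hh : ‖h‖ ≤ 1
    · rcases eq_or_ne h 0 with h0 | h0
      · subst h0
        have hz : A x 0 / ‖(0 : EuclideanSpace ℝ (Fin d))‖ ^ p = 0 := by
          rw [norm_zero, Real.zero_rpow (ne_of_gt hppos), div_zero]
        rw [Real.norm_eq_abs, hz, mul_zero, abs_zero, hbound]
        simp only [if_pos hh]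
        exact mul_nonneg (mul_nonneg hK hc₂.le) (Real.rpow_nonneg (norm_nonneg _) _)
      · have hpos : 0 < ‖h‖ := norm_pos_iff.2 h0
        have hb1 : |f (x + h) - f x - fderiv ℝ f x h| ≤ K * ‖h‖^2 :=
          my_taylor f hf K hf2 x h
        rw [hbound]
        simp only [if_pos hh, Real.norm_eq_abs, abs_mul]
        calc |f (x + h) - f x - fderiv ℝ f x h| * |A x h / ‖h‖ ^ p|
            ≤ (K * ‖h‖^2) * (c₂ / ‖h‖ ^ p) :=
              mul_le_mul hb1 (hb2 hpos) (abs_nonneg _) (by positivity)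
          _ = K * c₂ * ‖h‖ ^ q := by
              rw [hqdef, Real.rpow_sub hpos,
                show ((2:ℝ)) = ((2:ℕ):ℝ) by norm_num, Real.rpow_natCast]
              ring
    · have h1 : 1 < ‖h‖ := not_le.1 hh
      have hpos : 0 < ‖h‖ := lt_trans one_pos h1
      have hb1 : |f (x + h) - f x - 0| ≤ 2*K := by
        rw [sub_zero]
        calc |f (x + h) - f x| ≤ |f (x + h)| + |f x| := abs_sub _ _
          _ ≤ 2*K := by linarith [hf0 (x+h), hf0 x]
      rw [hbound]
      simp only [if_neg hh, Real.norm_eq_abs, abs_mul]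
      calc |f (x + h) - f x - 0| * |A x h / ‖h‖ ^ p|
          ≤ (2*K) * (c₂ / ‖h‖ ^ p) :=
            mul_le_mul hb1 (hb2 hpos) (abs_nonneg _) (by positivity)
        _ = 2*K*c₂ * ‖h‖ ^ (-p) := by
            rw [Real.rpow_neg (norm_nonneg _), div_eq_mul_inv]
            ring
  · exact bound_int
  · apply ae_of_all
    intro h
    apply ContinuousAt.mul
    · refine ContinuousAt.sub (ContinuousAt.sub ?_ hf.continuous.continuousAt) ?_
      · exact (hf.continuous.comp (continuous_id.add continuous_const)).continuousAt
      · by_cases hh : ‖h‖ ≤ 1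
        · simp only [if_pos hh]
          exact ((hf.continuous_fderiv two_ne_zero).clm_apply continuous_const).continuousAt
        · simp only [if_neg hh]
          exact continuousAt_const
    · have contA : ContinuousAt (fun x => A x h) x₀ := by
        rw [Metric.continuousAt_iff]
        intro ε hε
        obtain ⟨δ, hδ, hδ'⟩ := hAcont x₀ (‖h‖ + 1) (by positivity) ε hε
        refine ⟨δ, hδ, fun {x} hx => ?_⟩
        rw [Real.dist_eq]
        exact hδ' x (by rwa [← dist_eq_norm]) h (by linarith [norm_nonneg h])
      exact contA.div_const _
end

section
/- Let μ and ν be two nonatomic σ-finite Borel measures on (0,∞)² that are finite and positive on sets of the form [a,b) × [c,d) with 0 < a < b, 0 < c < d, assign infinite mass to every neighborhood of the coordinate axes appropriately, and suppose μ(B)/ν-comparability: there exist constants 0 < c₁ ≤ c₂ with c₁ ν(B) ≤ μ(B) ≤ c₂ ν(B) for all Borel B (as when dμ = A(h)/|h|^{d+α} dh and dν = dh/|h|^{d+α} with c₁ ≤ A ≤ c₂, d = 2). Then there exists an injective measurable map F : (0,∞)² → (0,∞)² such that ν(F^{−1}(B)) = μ(B) for every Borel set B, i.e. the pushforward of ν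 under F equals μ. -/
open MeasureTheory

namespace Stmt15Aux

open Set
open scoped ENNReal

/-- Covering lemma: if every point of `S` with a smaller companion in `S` lies in a
rational-indexed null set, then `S` is null. -/
lemma cov_lt (m : Measure ℝ) [NullSingletonClass m] (S : Set ℝ) (g : ℚ → Set ℝ)
    (h : ∀ z ∈ S, ∀ x ∈ S, x < z → ∃ q : ℚ, m (g q) = 0 ∧ z ∈ g q) : m S = 0 := by
  classical
  have hsub : S ⊆ {z ∈ S | ∀ x ∈ S, ¬ x < z} ∪ ⋃ q : ℚ, (if m (g q) = 0 then g q else ∅) := by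
    intro z hz
    by_cases hmin : ∀ x ∈ S, ¬ x < z
    · exact Or.inl ⟨hz, hmin⟩
    · push_neg at hmin
      obtain ⟨x, hx, hxz⟩ := hmin
      obtain ⟨q, hq0, hqz⟩ := h z hz x hx hxz
      exact Or.inr (mem_iUnion.2 ⟨q, by simp [hq0, hqz]⟩)
  refine measure_mono_null hsub (measure_union_null ?_ ?_)
  · have : {z ∈ S | ∀ x ∈ S, ¬ x < z}.Subsingleton := by
      intro a ha b hb
      rcases lt_trichotomy a b with h' | h' | h'
      · exact absurd h' (hb.2 a ha.1)
      · exact h'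
      · exact absurd h' (ha.2 b hb.1)
    exact this.countable.measure_zero m
  · refine measure_iUnion_null fun q => ?_
    split_ifs with h0
    · exact h0
    · simp

lemma cov_gt (m : Measure ℝ) [NullSingletonClass m] (S : Set ℝ) (g : ℚ → Set ℝ)
    (h : ∀ z ∈ S, ∀ x ∈ S, z < x → ∃ q : ℚ, m (g q) = 0 ∧ z ∈ g q) : m S = 0 := by
  classical
  have hsub : S ⊆ {z ∈ S | ∀ x ∈ S, ¬ z < x} ∪ ⋃ q : ℚ, (if m (g q) = 0 then g q else ∅) := by
    intro z hz
    by_cases hmax : ∀ x ∈ S, ¬ z < x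
    · exact Or.inl ⟨hz, hmax⟩
    · push_neg at hmax
      obtain ⟨x, hx, hxz⟩ := hmax
      obtain ⟨q, hq0, hqz⟩ := h z hz x hx hxz
      exact Or.inr (mem_iUnion.2 ⟨q, by simp [hq0, hqz]⟩)
  refine measure_mono_null hsub (measure_union_null ?_ ?_)
  · have : {z ∈ S | ∀ x ∈ S, ¬ z < x}.Subsingleton := by
      intro a ha b hb
      rcases lt_trichotomy a b with h' | h' | h'
      · exact absurd h' (ha.2 b hb.1)
      · exact h'
      · exact absurd h' (hb.2 a ha.1)
    exact this.countable.measure_zero m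
  · refine measure_iUnion_null fun q => ?_
    split_ifs with h0
    · exact h0
    · simp

lemma exists_cdf (m : Measure ℝ) [IsFiniteMeasure m] [NullSingletonClass m] :
    ∃ c : ℝ → ℝ, Measurable c ∧ (∀ x, c x ∈ Set.Icc 0 (m Set.univ).toReal) ∧
      (∀ B : Set ℝ, MeasurableSet B →
        m (c ⁻¹' B) = volume (B ∩ Set.Ico 0 (m Set.univ).toReal)) ∧
      ∃ N : Set ℝ, MeasurableSet N ∧ m N = 0 ∧ Set.InjOn c Nᶜ ∧
        ∀ x ∉ N, c x ∈ Set.Ioo 0 (m Set.univ).toReal := by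
  classical
  set βr : ℝ := (m Set.univ).toReal with hβr
  have hfin : ∀ s : Set ℝ, m s ≠ ⊤ := fun s => measure_ne_top m s
  set c : ℝ → ℝ := fun x => (m (Iic x)).toReal with hc
  have hcle : ∀ (x : ℝ) (y : ℝ), 0 ≤ y → (c x ≤ y ↔ m (Iic x) ≤ ENNReal.ofReal y) := by
    intro x y hy
    rw [hc]
    constructor
    · intro h
      calc m (Iic x) = ENNReal.ofReal ((m (Iic x)).toReal) := (ENNReal.ofReal_toReal (hfin _)).symm
        _ ≤ ENNReal.ofReal y := ENNReal.ofReal_le_ofReal h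
    · intro h
      have := ENNReal.toReal_le_toReal (hfin _) ENNReal.ofReal_ne_top |>.mpr h
      rwa [ENNReal.toReal_ofReal hy] at this
  have hmono : Monotone c := fun x y hxy =>
    ENNReal.toReal_le_toReal (hfin _) (hfin _) |>.mpr (measure_mono (Iic_subset_Iic.2 hxy))
  have hcm : Measurable c := hmono.measurable
  have hc0 : ∀ x, 0 ≤ c x := fun x => ENNReal.toReal_nonneg
  have hcβ : ∀ x, c x ≤ βr :=
    fun x => ENNReal.toReal_le_toReal (hfin _) (hfin _) |>.mpr (measure_mono (subset_univ _))
  -- key computation of sublevel measures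
  have hlevel : ∀ y : ℝ, 0 ≤ y → y < βr → m {x | c x ≤ y} = ENNReal.ofReal y := by
    intro y hy0 hyβ
    set S := {x | c x ≤ y} with hS
    by_cases hne : S.Nonempty
    · -- bounded above
      obtain ⟨M, hM⟩ : ∃ M : ℝ, y < c M := by
        by_contra hcon
        push_neg at hcon
        have hun : ⋃ n : ℕ, Iic (n : ℝ) = univ := by
          ext x; simp only [mem_iUnion, mem_Iic, mem_univ, iff_true]
          exact exists_nat_ge x
        have hmono' : Monotone (fun n : ℕ => Iic (n : ℝ)) :=
          fun a b hab => Iic_subset_Iic.mpr (Nat.cast_le.mpr hab)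
        have hsup := Directed.measure_iUnion (μ := m) hmono'.directed_le
        rw [hun] at hsup
        have hle : m univ ≤ ENNReal.ofReal y := by
          rw [hsup]
          exact iSup_le fun n => (hcle _ _ hy0).mp (hcon _)
        have : βr ≤ y := by
          have := ENNReal.toReal_le_toReal (hfin univ) ENNReal.ofReal_ne_top |>.mpr hle
          rwa [ENNReal.toReal_ofReal hy0] at this
        linarith
      have hub : ∀ x ∈ S, x ≤ M := by
        intro x hx
        by_contra hxM
        push_neg at hxM
        have : c M ≤ y := le_trans (hmono hxM.le) hx
        linarith
      have hbdd : BddAbove S := ⟨M, hub⟩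
      set u : ℝ := sSup S with hu
      have hlty : ∀ x, x < u → c x ≤ y := by
        intro x hx
        obtain ⟨s, hsS, hxs⟩ := exists_lt_of_lt_csSup hne hx
        exact le_trans (hmono hxs.le) hsS
      have hgty : ∀ x, u < x → y < c x := by
        intro x hx
        by_contra hcon
        push_neg at hcon
        exact absurd (le_csSup hbdd (by exact hcon : x ∈ S)) (not_le.2 hx)
      -- m (Iio u) ≤ ofReal y
      have hIio : m (Iio u) ≤ ENNReal.ofReal y := by
        have hun : ⋃ n : ℕ, Iic (u - 1/(n+1)) = Iio u := by
          ext x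
          simp only [mem_iUnion, mem_Iic, mem_Iio]
          constructor
          · rintro ⟨n, hn⟩
            have : (0:ℝ) < 1/(n+1) := by positivity
            linarith
          · intro hx
            obtain ⟨n, hn⟩ := exists_nat_one_div_lt (by linarith : (0:ℝ) < u - x)
            exact ⟨n, by linarith⟩
        have hmono' : Monotone (fun n : ℕ => Iic (u - 1/(n+1))) := by
          intro a b hab
          apply Iic_subset_Iic.mpr
          have hab' : (a:ℝ) ≤ b := Nat.cast_le.mpr hab
          have : (1:ℝ)/(b+1) ≤ 1/(a+1) := by
            apply one_div_le_one_div_of_le (by positivity)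
            linarith
          linarith
        have hsup := Directed.measure_iUnion (μ := m) hmono'.directed_le
        rw [hun] at hsup
        rw [hsup]
        refine iSup_le fun n => (hcle _ _ hy0).mp (hlty _ ?_)
        have : (0:ℝ) < 1/(n+1) := by positivity
        linarith
      -- ofReal y ≤ m (Iic u)
      have hIic : ENNReal.ofReal y ≤ m (Iic u) := by
        have hin : ⋂ n : ℕ, Iic (u + 1/(n+1)) = Iic u := by
          ext x
          simp only [mem_iInter, mem_Iic]
          constructor
          · intro h
            by_contra hx
            push_neg at hx
            obtain ⟨n, hn⟩ := exists_nat_one_div_lt (by linarith : (0:ℝ) < x - u)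
            exact absurd (h n) (by push_neg; linarith)
          · intro h n
            have : (0:ℝ) < 1/(n+1) := by positivity
            linarith
        have hanti : Antitone (fun n : ℕ => Iic (u + 1/(n+1))) := by
          intro a b hab
          apply Iic_subset_Iic.mpr
          have hab' : (a:ℝ) ≤ b := Nat.cast_le.mpr hab
          have : (1:ℝ)/(b+1) ≤ 1/(a+1) := by
            apply one_div_le_one_div_of_le (by positivity)
            linarith
          linarith
        have hinf := Directed.measure_iInter (μ := m) (fun n => (measurableSet_Iic).nullMeasurableSet)
          hanti.directed_ge ⟨0, hfin _⟩
        rw [hin] at hinf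
        rw [hinf]
        refine le_iInf fun n => ?_
        have hpos : (0:ℝ) < 1/(n+1) := by positivity
        have hy' : y < c (u + 1/(n+1)) := hgty _ (by linarith)
        have : ENNReal.ofReal y ≤ ENNReal.ofReal (c (u + 1/(n+1))) := ENNReal.ofReal_le_ofReal hy'.le
        rwa [hc, ENNReal.ofReal_toReal (hfin _)] at this
      have hSsub : Iio u ⊆ S := fun x hx => hlty x hx
      have hSsub' : S ⊆ Iic u := fun x hx => le_csSup hbdd hx
      have hIioIic : m (Iio u) = m (Iic u) := measure_congr Iio_ae_eq_Iic
      have h1 : m S ≤ ENNReal.ofReal y := by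
        calc m S ≤ m (Iic u) := measure_mono hSsub'
          _ = m (Iio u) := hIioIic.symm
          _ ≤ ENNReal.ofReal y := hIio
      have h2 : ENNReal.ofReal y ≤ m S := by
        calc ENNReal.ofReal y ≤ m (Iic u) := hIic
          _ = m (Iio u) := hIioIic.symm
          _ ≤ m S := measure_mono hSsub
      exact le_antisymm h1 h2
    · -- S empty : then y = 0
      have hy0' : y ≤ 0 := by
        by_contra hypos
        push_neg at hypos
        apply hne
        have hIempty : ⋂ n : ℕ, Iic (-(n : ℝ)) = ∅ := by
          ext x
          simp only [mem_iInter, mem_Iic, mem_empty_iff_false, iff_false, not_forall, not_le]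
          obtain ⟨n, hn⟩ := exists_nat_gt (-x)
          exact ⟨n, by linarith⟩
        have htend := tendsto_measure_iInter_atTop (μ := m) (s := fun n : ℕ => Iic (-(n : ℝ)))
          (fun n => nullMeasurableSet_Iic)
          (fun a b hab => Iic_subset_Iic.2 (by exact_mod_cast neg_le_neg (Nat.cast_le.2 hab)))
          ⟨0, hfin _⟩
        rw [hIempty, measure_empty] at htend
        have hev := htend.eventually_lt_const (by simpa using hypos : (0:ℝ≥0∞) < ENNReal.ofReal y)
        obtain ⟨n, hn⟩ := hev.exists
        exact ⟨-(n : ℝ), (hcle _ _ hy0).mpr hn.le⟩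
      have hyy : y = 0 := le_antisymm hy0' hy0
      rw [not_nonempty_iff_eq_empty.mp hne, measure_empty, hyy, ENNReal.ofReal_zero]
  
  -- the pushforward property
  have hmap : m.map c = volume.restrict (Ico 0 βr) := by
    haveI : IsFiniteMeasure (m.map c) := Measure.isFiniteMeasure_map m c
    refine Measure.ext_of_Iic _ _ (fun y => ?_)
    rw [Measure.map_apply hcm measurableSet_Iic, Measure.restrict_apply measurableSet_Iic]
    rcases lt_or_ge y 0 with hy | hy
    · have h1 : c ⁻¹' Iic y = ∅ := by
        ext x; simp only [mem_preimage, mem_Iic, mem_empty_iff_false, iff_false, not_le]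
        exact lt_of_lt_of_le hy (hc0 x)
      have h2 : Iic y ∩ Ico 0 βr = ∅ := by
        ext x
        simp only [mem_inter_iff, mem_Iic, mem_Ico, mem_empty_iff_false, iff_false, not_and]
        intro hxy h0
        exact absurd (h0.trans hxy) (not_le.2 hy)
      rw [h1, h2]; simp
    · rcases lt_or_ge y βr with hyβ | hyβ
      · have h1 : c ⁻¹' Iic y = {x | c x ≤ y} := rfl
        have h2 : Iic y ∩ Ico 0 βr = Icc 0 y := by
          ext x
          simp only [mem_inter_iff, mem_Iic, mem_Ico, mem_Icc]
          constructor
          · rintro ⟨h1, h2, _⟩; exact ⟨h2, h1⟩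
          · rintro ⟨h1, h2⟩; exact ⟨h2, h1, lt_of_le_of_lt h2 hyβ⟩
        rw [h1, h2, hlevel y hy hyβ, Real.volume_Icc, sub_zero]
      · have h1 : c ⁻¹' Iic y = univ := by
          ext x; simp only [mem_preimage, mem_Iic, mem_univ, iff_true]
          exact le_trans (hcβ x) hyβ
        have h2 : Iic y ∩ Ico 0 βr = Ico 0 βr := by
          apply inter_eq_self_of_subset_right
          intro x hx
          exact le_trans hx.2.le hyβ
        rw [h1, h2, Real.volume_Ico, sub_zero, hβr, ENNReal.ofReal_toReal (hfin _)]
  have hmapB : ∀ B : Set ℝ, MeasurableSet B → m (c ⁻¹' B) = volume (B ∩ Ico 0 βr) := by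
    intro B hB
    rw [← Measure.map_apply hcm hB, hmap, Measure.restrict_apply hB]
  -- the bad set
  set Z0 : Set ℝ := {x | m (Iic x) = 0} with hZ0
  set Z1 : Set ℝ := {x | m (Ioi x) = 0} with hZ1
  set P : ℚ → Set ℝ := fun q => {x | x ≤ (q:ℝ) ∧ m (Icc x (q:ℝ)) = 0} with hP
  set Q : ℚ → Set ℝ := fun q => {x | (q:ℝ) ≤ x ∧ m (Icc (q:ℝ) x) = 0} with hQ
  set N : Set ℝ := (Z0 ∪ Z1) ∪ ((⋃ q, P q) ∪ ⋃ q, Q q) with hN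
  have hZ0m : MeasurableSet Z0 := by
    apply Set.OrdConnected.measurableSet
    exact ⟨fun x hx y hy z hz => measure_mono_null (Iic_subset_Iic.2 hz.2) hy⟩
  have hZ1m : MeasurableSet Z1 := by
    apply Set.OrdConnected.measurableSet
    exact ⟨fun x hx y hy z hz => measure_mono_null (Ioi_subset_Ioi hz.1) hx⟩
  have hPm : ∀ q, MeasurableSet (P q) := by
    intro q
    apply Set.OrdConnected.measurableSet
    exact ⟨fun x hx y hy z hz =>
      ⟨le_trans hz.2 hy.1, measure_mono_null (Icc_subset_Icc_left hz.1) hx.2⟩⟩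
  have hQm : ∀ q, MeasurableSet (Q q) := by
    intro q
    apply Set.OrdConnected.measurableSet
    exact ⟨fun x hx y hy z hz =>
      ⟨le_trans hx.1 hz.1, measure_mono_null (Icc_subset_Icc_right hz.2) hy.2⟩⟩
  have hNm : MeasurableSet N :=
    ((hZ0m.union hZ1m).union ((MeasurableSet.iUnion hPm).union (MeasurableSet.iUnion hQm)))
  have hZ0null : m Z0 = 0 := by
    apply cov_gt m Z0 (fun q => Iic (q:ℝ))
    intro z hz x hx hzx
    obtain ⟨q, hq1, hq2⟩ := exists_rat_btwn hzx
    exact ⟨q, measure_mono_null (Iic_subset_Iic.2 hq2.le) hx, hq1.le⟩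
  have hZ1null : m Z1 = 0 := by
    apply cov_lt m Z1 (fun q => Ioi (q:ℝ))
    intro z hz x hx hxz
    obtain ⟨q, hq1, hq2⟩ := exists_rat_btwn hxz
    exact ⟨q, measure_mono_null (Ioi_subset_Ioi hq1.le) hx, hq2⟩
  have hPnull : ∀ q, m (P q) = 0 := by
    intro q0
    apply cov_lt m (P q0) (fun r => Icc (r:ℝ) (q0:ℝ))
    intro z hz x hx hxz
    obtain ⟨r, hr1, hr2⟩ := exists_rat_btwn hxz
    exact ⟨r, measure_mono_null (Icc_subset_Icc_left hr1.le) hx.2, hr2.le, hz.1⟩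
  have hQnull : ∀ q, m (Q q) = 0 := by
    intro q0
    apply cov_gt m (Q q0) (fun r => Icc (q0:ℝ) (r:ℝ))
    intro z hz x hx hzx
    obtain ⟨r, hr1, hr2⟩ := exists_rat_btwn hzx
    exact ⟨r, measure_mono_null (Icc_subset_Icc_right hr2.le) hx.2, hz.1, hr1.le⟩
  have hNnull : m N = 0 := by
    rw [hN]
    refine measure_union_null (measure_union_null hZ0null hZ1null)
      (measure_union_null (measure_iUnion_null hPnull) (measure_iUnion_null hQnull))
  -- helper : equal c values with x < x' force x' ∈ N
  have hkey : ∀ x x' : ℝ, x < x' → c x = c x' → x' ∈ N := by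
    intro x x' hlt heq
    have h1 : m (Iic x) = m (Iic x') :=
      (ENNReal.toReal_eq_toReal_iff' (hfin _) (hfin _)).mp heq
    have hunion : m (Iic x) + m (Ioc x x') = m (Iic x') := by
      rw [← measure_union (Iic_disjoint_Ioc le_rfl) measurableSet_Ioc,
        Iic_union_Ioc_eq_Iic hlt.le]
    have hIoc : m (Ioc x x') = 0 := by
      have : m (Iic x) + m (Ioc x x') = m (Iic x) + 0 := by
        rw [add_zero, hunion, h1]
      exact (ENNReal.add_right_inj (hfin _)).mp this
    obtain ⟨q, hq1, hq2⟩ := exists_rat_btwn hlt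
    have : x' ∈ Q q := by
      refine ⟨hq2.le, measure_mono_null ?_ hIoc⟩
      intro z hz
      exact ⟨lt_of_lt_of_le hq1 hz.1, hz.2⟩
    rw [hN]
    exact Or.inr (Or.inr (mem_iUnion.2 ⟨q, this⟩))
  refine ⟨c, hcm, fun x => ⟨hc0 x, hcβ x⟩, hmapB, N, hNm, hNnull, ?_, ?_⟩
  · intro x hx x' hx' heq
    by_contra hne
    rcases lt_trichotomy x x' with h | h | h
    · exact hx' (hkey x x' h heq)
    · exact hne h
    · exact hx (hkey x' x h heq.symm)
  · intro x hxN
    constructor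
    · by_contra hcon
      push_neg at hcon
      have hcx : c x = 0 := le_antisymm hcon (hc0 x)
      have : m (Iic x) = 0 := by
        have := ENNReal.toReal_eq_zero_iff (m (Iic x)) |>.mp hcx
        rcases this with h | h
        · exact h
        · exact absurd h (hfin _)
      exact hxN (by rw [hN]; exact Or.inl (Or.inl this))
    · by_contra hcon
      push_neg at hcon
      have hcx : c x = βr := le_antisymm (hcβ x) hcon
      have h1 : m (Iic x) = m univ := (ENNReal.toReal_eq_toReal_iff' (hfin _) (hfin _)).mp hcx
      have hunion : m (Iic x) + m (Ioi x) = m univ := by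
        rw [← measure_union (Iic_disjoint_Ioi le_rfl) measurableSet_Ioi, Iic_union_Ioi]
      have h2 : m (Ioi x) = 0 := by
        have : m (Iic x) + m (Ioi x) = m (Iic x) + 0 := by
          rw [add_zero, hunion, h1]
        exact (ENNReal.add_right_inj (hfin _)).mp this
      exact hxN (by rw [hN]; exact Or.inl (Or.inr h2))

noncomputable section

/-- The dyadic interval `[2^i, 2^{i+1})`. -/
def J (i : ℤ) : Set ℝ := Ico ((2:ℝ)^i) ((2:ℝ)^(i+1))

lemma J_disjoint : Pairwise (Function.onFun Disjoint J) := by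
  intro i j hij
  wlog h : i < j generalizing i j
  · exact (this hij.symm (hij.lt_or_gt.resolve_left h)).symm
  apply Set.disjoint_left.mpr
  rintro x ⟨hx1, hx2⟩ ⟨hy1, hy2⟩
  have : (2:ℝ)^(i+1) ≤ (2:ℝ)^j := zpow_le_zpow_right₀ one_le_two (by omega)
  linarith
lemma mem_J_log {x : ℝ} (hx : 0 < x) : x ∈ J (Int.log 2 x) :=
  ⟨by exact_mod_cast Int.zpow_log_le_self (by norm_num) hx,
   by exact_mod_cast Int.lt_zpow_succ_log_self (by norm_num) x⟩
lemma J_pos {i : ℤ} {x : ℝ} (hx : x ∈ J i) : 0 < x :=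
  lt_of_lt_of_le (zpow_pos (by norm_num) i) hx.1

lemma exists_toLine (m : Measure (ℝ × ℝ)) [NullSingletonClass m]
    (hsupp : m ((Set.Ioi (0:ℝ) ×ˢ Set.Ioi (0:ℝ))ᶜ) = 0)
    (hfin : ∀ a b c e : ℝ, 0 < a → a < b → 0 < c → c < e →
      m (Set.Ico a b ×ˢ Set.Ico c e) < ⊤)
    (hinf : m (Set.Ioo 0 1 ×ˢ Set.Ioi (0:ℝ)) = ⊤) :
    ∃ g : ℝ × ℝ → ℝ, Measurable g ∧
      (∀ B : Set ℝ, MeasurableSet B → m (g ⁻¹' B) = volume (B ∩ Set.Ici 0)) ∧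
      ∃ N : Set (ℝ × ℝ), MeasurableSet N ∧ m N = 0 ∧
        Set.InjOn g ((Set.Ioi (0:ℝ) ×ˢ Set.Ioi (0:ℝ)) \ N) ∧
        ∀ p ∈ Set.Ioi (0:ℝ) ×ˢ Set.Ioi (0:ℝ), 0 ≤ g p := by
  classical
  set Qd : Set (ℝ × ℝ) := Set.Ioi (0:ℝ) ×ˢ Set.Ioi (0:ℝ) with hQd
  set E : ℕ ≃ ℤ × ℤ := (Denumerable.eqv (ℤ × ℤ)).symm with hE
  set R : ℕ → Set (ℝ × ℝ) := fun n => J (E n).1 ×ˢ J (E n).2 with hR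
  have hRmeas : ∀ n, MeasurableSet (R n) := fun n => measurableSet_Ico.prod measurableSet_Ico
  have hRdisj : Pairwise (Function.onFun Disjoint R) := by
    intro n n' hnn'
    have h2 : E n ≠ E n' := fun h => hnn' (E.injective h)
    rcases Prod.ext_iff.not.mp h2 |> not_and_or.mp with h | h
    · exact Set.disjoint_left.mpr fun p hp hp' =>
        Set.disjoint_left.mp (J_disjoint h) hp.1 hp'.1
    · exact Set.disjoint_left.mpr fun p hp hp' =>
        Set.disjoint_left.mp (J_disjoint h) hp.2 hp'.2
  have hRQ : ⋃ n, R n = Qd := by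
    ext p
    simp only [mem_iUnion, hQd, mem_prod, mem_Ioi]
    constructor
    · rintro ⟨n, hp⟩
      exact ⟨J_pos hp.1, J_pos hp.2⟩
    · rintro ⟨h1, h2⟩
      exact ⟨E.symm (Int.log 2 p.1, Int.log 2 p.2), by
        rw [hR]
        simp only [Equiv.apply_symm_apply]
        exact ⟨mem_J_log h1, mem_J_log h2⟩⟩
  have hRfin : ∀ n, m (R n) ≠ ⊤ := by
    intro n
    have h1 : (0:ℝ) < (2:ℝ)^(E n).1 := zpow_pos (by norm_num) _
    have h2 : (2:ℝ)^(E n).1 < (2:ℝ)^((E n).1+1) := zpow_lt_zpow_right₀ one_lt_two (by omega)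
    have h3 : (0:ℝ) < (2:ℝ)^(E n).2 := zpow_pos (by norm_num) _
    have h4 : (2:ℝ)^(E n).2 < (2:ℝ)^((E n).2+1) := zpow_lt_zpow_right₀ one_lt_two (by omega)
    exact (hfin _ _ _ _ h1 h2 h3 h4).ne
  -- the pieces
  set e : (ℝ × ℝ) ≃ᵐ ℝ :=
    PolishSpace.measurableEquivOfNotCountable (by exact not_countable) (by exact not_countable)
    with he
  set m' : ℕ → Measure ℝ := fun n => (m.restrict (R n)).map e with hm'
  have hm'univ : ∀ n, m' n Set.univ = m (R n) := by
    intro n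
    rw [hm', Measure.map_apply e.measurable MeasurableSet.univ, preimage_univ,
      Measure.restrict_apply MeasurableSet.univ, univ_inter]
  have hm'fin : ∀ n, IsFiniteMeasure (m' n) := by
    intro n
    exact ⟨by rw [hm'univ]; exact (hRfin n).lt_top⟩
  have hm'atomless : ∀ n, NullSingletonClass (m' n) := by
    intro n
    constructor
    intro x
    rw [hm', Measure.map_apply e.measurable (measurableSet_singleton x)]
    have : e ⁻¹' {x} = {e.symm x} := by
      ext y
      simp only [mem_preimage, mem_singleton_iff]
      exact ⟨fun h => by rw [← h, MeasurableEquiv.symm_apply_apply],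
        fun h => by rw [h, MeasurableEquiv.apply_symm_apply]⟩
    rw [this, Measure.restrict_apply (measurableSet_singleton _)]
    exact measure_mono_null inter_subset_left (measure_singleton (μ := m) (e.symm x))
  set β : ℕ → ℝ := fun n => (m (R n)).toReal with hβ
  have hβ0 : ∀ n, 0 ≤ β n := fun n => ENNReal.toReal_nonneg
  set t : ℕ → ℝ := fun n => ∑ k ∈ Finset.range n, β k with ht
  have ht0 : t 0 = 0 := by simp [ht]
  have htsucc : ∀ n, t (n+1) = t n + β n := by
    intro n; rw [ht]; exact Finset.sum_range_succ _ _
  have htmono : Monotone t :=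
    monotone_nat_of_le_succ fun n => by rw [htsucc]; linarith [hβ0 n]
  have htnn : ∀ n, 0 ≤ t n := fun n => ht0 ▸ htmono (Nat.zero_le n)
  -- divergence of the partial sums
  have hdiv : ∀ y : ℝ, ∃ n, y < t n := by
    intro y
    by_contra hcon
    push_neg at hcon
    have hsum : ∀ n, ∑ k ∈ Finset.range n, m (R k) ≤ ENNReal.ofReal y := by
      intro n
      have hfin' : ∀ k ∈ Finset.range n, m (R k) ≠ ⊤ := fun k _ => hRfin k
      have : (∑ k ∈ Finset.range n, m (R k)).toReal = t n := by
        rw [ENNReal.toReal_sum hfin']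
      calc ∑ k ∈ Finset.range n, m (R k)
          = ENNReal.ofReal (t n) := by
            rw [← this, ENNReal.ofReal_toReal (ENNReal.sum_ne_top.mpr hfin')]
        _ ≤ ENNReal.ofReal y := ENNReal.ofReal_le_ofReal (hcon n)
    have htot : ∑' n, m (R n) = ⊤ := by
      rw [← measure_iUnion hRdisj hRmeas, hRQ]
      refine eq_top_iff.mpr ?_
      rw [← hinf]
      refine measure_mono ?_
      rintro ⟨x, z⟩ ⟨hx, hz⟩
      exact ⟨hx.1, hz⟩
    have hle : (⊤:ℝ≥0∞) ≤ ENNReal.ofReal y := by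
      rw [← htot, ENNReal.tsum_eq_iSup_sum' (fun n => Finset.range n)
        (fun s => Finset.exists_nat_subset_range s)]
      exact iSup_le fun n => hsum n
    exact absurd hle (by simp)
    -- get the 1D cdf maps
  have hcdf : ∀ n : ℕ, ∃ cf : ℝ → ℝ, Measurable cf ∧
      (∀ x, cf x ∈ Set.Icc 0 ((m' n) Set.univ).toReal) ∧
      (∀ B : Set ℝ, MeasurableSet B →
        m' n (cf ⁻¹' B) = volume (B ∩ Set.Ico 0 ((m' n) Set.univ).toReal)) ∧
      ∃ N : Set ℝ, MeasurableSet N ∧ m' n N = 0 ∧ Set.InjOn cf Nᶜ ∧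
        ∀ x ∉ N, cf x ∈ Set.Ioo 0 ((m' n) Set.univ).toReal := by
    intro n
    haveI := hm'fin n; haveI := hm'atomless n
    exact exists_cdf (m' n)
  choose c hcmeas hcrange hcmap hcN using hcdf
  choose N hNmeas hNnull hcinj hcrange' using hcN
  have hβeq : ∀ n, ((m' n) Set.univ).toReal = β n := fun n => by rw [hm'univ]
  -- the glued map
  set g : ℝ × ℝ → ℝ :=
    fun p => if h : ∃ n, p ∈ R n then t h.choose + c h.choose (e p) else 0 with hg
  have hidx : ∀ (p : ℝ × ℝ) (n : ℕ), p ∈ R n → g p = t n + c n (e p) := by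
    intro p n hp
    have hex : ∃ k, p ∈ R k := ⟨n, hp⟩
    have hch : hex.choose = n := by
      by_contra hne
      exact Set.disjoint_left.mp (hRdisj hne) hex.choose_spec hp
    rw [hg]
    simp only [dif_pos hex, hch]
  have hFmeas : ∀ n, Measurable (fun p : ℝ × ℝ => t n + c n (e p)) :=
    fun n => measurable_const.add ((hcmeas n).comp e.measurable)
  have hgpre : ∀ B : Set ℝ, g ⁻¹' B =
      (⋃ n, R n ∩ (fun p : ℝ × ℝ => t n + c n (e p)) ⁻¹' B) ∪
      (Qdᶜ ∩ (if (0:ℝ) ∈ B then Set.univ else ∅)) := by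
    intro B
    ext p
    by_cases hp : ∃ n, p ∈ R n
    · obtain ⟨n, hn⟩ := hp
      have hpQ : p ∈ Qd := hRQ ▸ mem_iUnion.2 ⟨n, hn⟩
      simp only [mem_preimage, mem_union, mem_iUnion, mem_inter_iff, mem_compl_iff]
      constructor
      · intro hgB
        exact Or.inl ⟨n, hn, by rw [← hidx p n hn]; exact hgB⟩
      · rintro (⟨k, hk, hfk⟩ | ⟨hQc, _⟩)
        · rw [hidx p k hk]; exact hfk
        · exact absurd hpQ hQc
    · have hpQ : p ∉ Qd := by rw [← hRQ]; simpa using hp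
      have hgp : g p = 0 := dif_neg hp
      simp only [mem_preimage, hgp, mem_union, mem_iUnion, mem_inter_iff, mem_compl_iff]
      constructor
      · intro h0B
        exact Or.inr ⟨hpQ, by simp [if_pos h0B]⟩
      · rintro (⟨k, hk, _⟩ | ⟨_, hin⟩)
        · exact absurd ⟨k, hk⟩ hp
        · by_cases h0B : (0:ℝ) ∈ B
          · exact h0B
          · simp [if_neg h0B] at hin
  have hgm : Measurable g := by
    intro B hB
    rw [hgpre B]
    refine MeasurableSet.union
      (MeasurableSet.iUnion fun n => (hRmeas n).inter ((hFmeas n) hB)) ?_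
    refine MeasurableSet.inter ?_ ?_
    · exact (measurableSet_Ioi.prod measurableSet_Ioi).compl
    · split_ifs
      · exact MeasurableSet.univ
      · exact MeasurableSet.empty
  -- interval disjointness
  have hIdisj : Pairwise (Function.onFun Disjoint fun n => Ico (t n) (t (n+1))) := by
    intro a b hab
    wlog h : a < b generalizing a b
    · exact (this hab.symm (hab.lt_or_gt.resolve_left h)).symm
    apply Set.disjoint_left.mpr
    rintro x ⟨hx1, hx2⟩ ⟨hy1, hy2⟩
    have : t (a+1) ≤ t b := htmono (by omega)
    linarith
  have hIunion : ∀ B : Set ℝ, ⋃ n, (B ∩ Ico (t n) (t (n+1))) = B ∩ Ici 0 := by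
    intro B
    ext x
    simp only [mem_iUnion, mem_inter_iff, mem_Ico, mem_Ici]
    constructor
    · rintro ⟨n, hxB, h1, h2⟩
      exact ⟨hxB, le_trans (htnn n) h1⟩
    · rintro ⟨hxB, hx0⟩
      have hex : ∃ k, x < t k := hdiv x
      have hfind := Nat.find_spec hex
      rcases Nat.eq_zero_or_pos (Nat.find hex) with h0 | hpos
      · rw [h0, ht0] at hfind
        linarith
      · obtain ⟨n, hn⟩ := Nat.exists_eq_succ_of_ne_zero hpos.ne'
        rw [Nat.succ_eq_add_one] at hn
        refine ⟨n, hxB, ?_, by rw [← hn]; exact hfind⟩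
        have := Nat.find_min hex (m := n) (by omega)
        push_neg at this
        exact this
  -- the pushforward property
  have hgmap : ∀ B : Set ℝ, MeasurableSet B → m (g ⁻¹' B) = volume (B ∩ Set.Ici 0) := by
    intro B hB
    rw [hgpre B]
    have hjunk : m (Qdᶜ ∩ (if (0:ℝ) ∈ B then Set.univ else ∅)) = 0 :=
      measure_mono_null inter_subset_left hsupp
    have hmain : m ((⋃ n, R n ∩ (fun p : ℝ × ℝ => t n + c n (e p)) ⁻¹' B) ∪
        (Qdᶜ ∩ (if (0:ℝ) ∈ B then Set.univ else ∅))) =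
        m (⋃ n, R n ∩ (fun p : ℝ × ℝ => t n + c n (e p)) ⁻¹' B) := by
      refine le_antisymm ((measure_union_le _ _).trans ?_) (measure_mono subset_union_left)
      rw [hjunk, add_zero]
    rw [hmain, measure_iUnion ?_ ?_]
    rotate_left
    · intro a b hab
      exact (hRdisj hab).mono inter_subset_left inter_subset_left
    · exact fun n => (hRmeas n).inter ((hFmeas n) hB)
    have hterm : ∀ n, m (R n ∩ (fun p : ℝ × ℝ => t n + c n (e p)) ⁻¹' B) =
        volume (B ∩ Ico (t n) (t (n+1))) := by
      intro n
      have hBt : MeasurableSet ((fun y : ℝ => t n + y) ⁻¹' B) :=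
        (measurable_const.add measurable_id) hB
      have h1 : m (R n ∩ (fun p : ℝ × ℝ => t n + c n (e p)) ⁻¹' B) =
          m.restrict (R n) (e ⁻¹' (c n ⁻¹' ((fun y : ℝ => t n + y) ⁻¹' B))) := by
        rw [Measure.restrict_apply (e.measurable ((hcmeas n) hBt)), inter_comm]
        rfl
      have h2 : m.restrict (R n) (e ⁻¹' (c n ⁻¹' ((fun y : ℝ => t n + y) ⁻¹' B))) =
          m' n (c n ⁻¹' ((fun y : ℝ => t n + y) ⁻¹' B)) :=
        (Measure.map_apply e.measurable ((hcmeas n) hBt)).symm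
      rw [h1, h2, hcmap n _ hBt, hβeq]
      have hset : ((fun y : ℝ => t n + y) ⁻¹' B) ∩ Ico 0 (β n) =
          (fun y : ℝ => t n + y) ⁻¹' (B ∩ Ico (t n) (t (n+1))) := by
        ext y
        simp only [mem_inter_iff, mem_preimage, mem_Ico, htsucc n]
        constructor
        · rintro ⟨h1, h2, h3⟩
          exact ⟨h1, by linarith, by linarith⟩
        · rintro ⟨h1, h2, h3⟩
          exact ⟨h1, by linarith, by linarith⟩
      rw [hset, measure_preimage_add]
    rw [tsum_congr hterm, ← measure_iUnion ?_ ?_]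
    rotate_left
    · intro a b hab
      exact (hIdisj hab).mono inter_subset_right inter_subset_right
    · exact fun n => hB.inter measurableSet_Ico
    rw [hIunion B]
  -- the bad set
  set Ng : Set (ℝ × ℝ) := ⋃ n, R n ∩ e ⁻¹' (N n) with hNg
  have hNgm : MeasurableSet Ng :=
    MeasurableSet.iUnion fun n => (hRmeas n).inter (e.measurable (hNmeas n))
  have hNgnull : m Ng = 0 := by
    refine measure_iUnion_null fun n => ?_
    have : m (R n ∩ e ⁻¹' (N n)) = m' n (N n) := by
      rw [hm', Measure.map_apply e.measurable (hNmeas n),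
        Measure.restrict_apply (e.measurable (hNmeas n)), inter_comm]
    rw [this]
    exact hNnull n
  refine ⟨g, hgm, hgmap, Ng, hNgm, hNgnull, ?_, ?_⟩
  · intro p hp p' hp' heq
    obtain ⟨n, hn⟩ := mem_iUnion.mp (hRQ ▸ hp.1 : p ∈ ⋃ k, R k)
    obtain ⟨n', hn'⟩ := mem_iUnion.mp (hRQ ▸ hp'.1 : p' ∈ ⋃ k, R k)
    have hnotN : e p ∉ N n := fun h => hp.2 (mem_iUnion.2 ⟨n, hn, h⟩)
    have hnotN' : e p' ∉ N n' := fun h => hp'.2 (mem_iUnion.2 ⟨n', hn', h⟩)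
    have hv : c n (e p) ∈ Ioo 0 (β n) := (hβeq n) ▸ hcrange' n _ hnotN
    have hv' : c n' (e p') ∈ Ioo 0 (β n') := (hβeq n') ▸ hcrange' n' _ hnotN'
    have hgp : g p = t n + c n (e p) := hidx p n hn
    have hgp' : g p' = t n' + c n' (e p') := hidx p' n' hn'
    have hnn' : n = n' := by
      by_contra hne
      have h1 : g p ∈ Ico (t n) (t (n+1)) :=
        ⟨by rw [hgp]; linarith [hv.1], by rw [hgp, htsucc n]; linarith [hv.2]⟩
      have h2 : g p' ∈ Ico (t n') (t (n'+1)) :=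
        ⟨by rw [hgp']; linarith [hv'.1], by rw [hgp', htsucc n']; linarith [hv'.2]⟩
      rw [heq] at h1
      exact Set.disjoint_left.mp (hIdisj hne) h1 h2
    subst hnn'
    have hceq : c n (e p) = c n (e p') := by
      have := heq
      rw [hgp, hgp'] at this
      linarith
    have := hcinj n hnotN hnotN' hceq
    exact e.injective this
  · intro p hp
    obtain ⟨n, hn⟩ := mem_iUnion.mp (hRQ ▸ hp : p ∈ ⋃ k, R k)
    rw [hidx p n hn]
    have := (hcrange n (e p)).1
    linarith [htnn n]

end

end Stmt15Aux

open Stmt15Aux Set in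
/-- Abstract form of the rectangle-matching construction of Section 3: if `μ` and
`ν` are nonatomic σ-finite Borel measures on the open quadrant `(0,∞)²`, finite
and positive on half-open rectangles, with infinite mass near the coordinate axes,
and `c₁ ν(B) ≤ μ(B) ≤ c₂ ν(B)` for all Borel `B`, then there is an injective
measurable map `F` of the quadrant with `ν(F⁻¹(B)) = μ(B)` for all Borel `B`. -/

theorem stmt15 (μ ν : Measure (ℝ × ℝ)) [SigmaFinite μ] [SigmaFinite ν]
    [NullSingletonClass μ] [NullSingletonClass ν]
    (hμsupp : μ ((Set.Ioi (0 : ℝ) ×ˢ Set.Ioi (0 : ℝ))ᶜ) = 0)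
    (hνsupp : ν ((Set.Ioi (0 : ℝ) ×ˢ Set.Ioi (0 : ℝ))ᶜ) = 0)
    (hrect : ∀ a b c e : ℝ, 0 < a → a < b → 0 < c → c < e →
      (0 < μ (Set.Ico a b ×ˢ Set.Ico c e) ∧ μ (Set.Ico a b ×ˢ Set.Ico c e) < ⊤) ∧
      (0 < ν (Set.Ico a b ×ˢ Set.Ico c e) ∧ ν (Set.Ico a b ×ˢ Set.Ico c e) < ⊤))
    (haxes : ∀ ε : ℝ, 0 < ε →
      μ (Set.Ioo 0 ε ×ˢ Set.Ioi (0 : ℝ)) = ⊤ ∧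
      μ (Set.Ioi (0 : ℝ) ×ˢ Set.Ioo 0 ε) = ⊤ ∧
      ν (Set.Ioo 0 ε ×ˢ Set.Ioi (0 : ℝ)) = ⊤ ∧
      ν (Set.Ioi (0 : ℝ) ×ˢ Set.Ioo 0 ε) = ⊤)
    (c₁ c₂ : ℝ) (hc₁ : 0 < c₁) (hc₁₂ : c₁ ≤ c₂)
    (hcomp : ∀ B : Set (ℝ × ℝ), MeasurableSet B →
      ENNReal.ofReal c₁ * ν B ≤ μ B ∧ μ B ≤ ENNReal.ofReal c₂ * ν B) :
    ∃ F : ℝ × ℝ → ℝ × ℝ, Measurable F ∧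
      Set.InjOn F (Set.Ioi (0 : ℝ) ×ˢ Set.Ioi (0 : ℝ)) ∧
      (∀ u ∈ Set.Ioi (0 : ℝ) ×ˢ Set.Ioi (0 : ℝ),
        F u ∈ Set.Ioi (0 : ℝ) ×ˢ Set.Ioi (0 : ℝ)) ∧
      ∀ B : Set (ℝ × ℝ), MeasurableSet B → ν (F ⁻¹' B) = μ B := by
  classical
  set Qd : Set (ℝ × ℝ) := Set.Ioi (0:ℝ) ×ˢ Set.Ioi (0:ℝ) with hQd
  have hQdm : MeasurableSet Qd := measurableSet_Ioi.prod measurableSet_Ioi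
  obtain ⟨g, hgm, hgmap, Ng, hNgm, hNgnull, hginj, hgnn⟩ :=
    exists_toLine ν hνsupp (fun a b c e ha hab hc hce => ((hrect a b c e ha hab hc hce).2).2)
      ((haxes 1 one_pos).2.2.1
)
  obtain ⟨h, hhm, hhmap, Nh, hNhm, hNhnull, hhinj, hhnn⟩ :=
    exists_toLine μ hμsupp (fun a b c e ha hab hc hce => ((hrect a b c e ha hab hc hce).1).2)
      ((haxes 1 one_pos).1)
  -- the inverse of h on its image
  set S : Set (ℝ × ℝ) := Qd \ Nh with hS
  have hSm : MeasurableSet S := hQdm.diff hNhm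
  have hSQd : S ⊆ Qd := diff_subset
  haveI : StandardBorelSpace ↥S := hSm.standardBorel
  set hc : ↥S → ℝ := fun p => h ↑p with hhc
  have hcm : Measurable hc := hhm.comp measurable_subtype_coe
  have hcinj : Function.Injective hc := by
    intro p p' hpp'
    exact Subtype.ext (hhinj p.2 p'.2 hpp')
  have hEmb : MeasurableEmbedding hc := hcm.measurableEmbedding hcinj
  set T : Set ℝ := Set.range hc with hT
  have hTm : MeasurableSet T := hEmb.measurableSet_range
  have hTIci : T ⊆ Set.Ici 0 := by
    rintro y ⟨p, rfl⟩
    exact hhnn ↑p (hSQd p.2)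
  set hinv : ℝ → ℝ × ℝ := fun y => if hy : ∃ p : ↥S, hc p = y then ↑hy.choose else ((1:ℝ),(1:ℝ))
    with hhinv
  have hinvT : ∀ y ∈ T, h (hinv y) = y ∧ hinv y ∈ S := by
    rintro y ⟨p, rfl⟩
    have hy : ∃ q : ↥S, hc q = hc p := ⟨p, rfl⟩
    simp only [hhinv, dif_pos hy]
    exact ⟨hy.choose_spec, hy.choose.2⟩
  have hinvQd : ∀ y, hinv y ∈ Qd := by
    intro y
    simp only [hhinv]
    split_ifs with hy
    · exact hSQd hy.choose.2
    · exact ⟨by norm_num, by norm_num⟩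
  have himage : ∀ C : Set (ℝ × ℝ),
      hc '' (Subtype.val ⁻¹' C) = h '' (S ∩ C) := by
    intro C
    ext y
    simp only [mem_image, mem_preimage, mem_inter_iff]
    constructor
    · rintro ⟨p, hpC, rfl⟩
      exact ⟨↑p, ⟨p.2, hpC⟩, rfl⟩
    · rintro ⟨x, ⟨hxS, hxC⟩, rfl⟩
      exact ⟨⟨x, hxS⟩, hxC, rfl⟩
  have himgm : ∀ C : Set (ℝ × ℝ), MeasurableSet C → MeasurableSet (h '' (S ∩ C)) := by
    intro C hC
    rw [← himage C]
    exact hEmb.measurableSet_image' (measurable_subtype_coe hC)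
  have hinvpre : ∀ C : Set (ℝ × ℝ), hinv ⁻¹' C =
      (h '' (S ∩ C)) ∪ (Tᶜ ∩ (if ((1:ℝ),(1:ℝ)) ∈ C then Set.univ else ∅)) := by
    intro C
    ext y
    by_cases hy : y ∈ T
    · obtain ⟨hy1, hy2⟩ := hinvT y hy
      simp only [mem_preimage, mem_union, mem_inter_iff, mem_compl_iff]
      constructor
      · intro hC
        exact Or.inl ⟨hinv y, ⟨hy2, hC⟩, hy1⟩
      · rintro (⟨x, ⟨hxS, hxC⟩, hxy⟩ | ⟨hyT, _⟩)
        · have : x = hinv y := hhinj hxS hy2 (by rw [hxy, hy1])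
          rwa [← this]
        · exact absurd hy hyT
    · have hy' : ¬∃ p : ↥S, hc p = y := by
        intro ⟨p, hp⟩
        exact hy ⟨p, hp⟩
      have : hinv y = ((1:ℝ),(1:ℝ)) := dif_neg hy'
      simp only [mem_preimage, this, mem_union, mem_inter_iff, mem_compl_iff]
      constructor
      · intro hC
        refine Or.inr ⟨hy, ?_⟩
        rw [if_pos hC]
        exact mem_univ y
      · rintro (⟨x, ⟨hxS, hxC⟩, hxy⟩ | ⟨_, hin⟩)
        · exact absurd ⟨⟨x, hxS⟩, hxy⟩ hy'
        · by_cases h1C : ((1:ℝ),(1:ℝ)) ∈ C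
          · exact h1C
          · rw [if_neg h1C] at hin
            exact absurd hin (notMem_empty y)
  have hinvm : Measurable hinv := by
    intro C hC
    rw [hinvpre C]
    refine (himgm C hC).union (hTm.compl.inter ?_)
    split_ifs
    · exact MeasurableSet.univ
    · exact MeasurableSet.empty
  -- T is co-null in [0,∞)
  have hTconull : volume (Tᶜ ∩ Set.Ici 0) = 0 := by
    rw [← hhmap Tᶜ hTm.compl]
    refine measure_mono_null ?_ (measure_union_null hμsupp hNhnull)
    intro p hp
    by_cases hpS : p ∈ S
    · exact absurd (⟨⟨p, hpS⟩, rfl⟩ : h p ∈ T) hp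
    · rw [hS] at hpS
      simp only [mem_diff, not_and, not_not] at hpS
      by_cases hpQ : p ∈ Qd
      · exact Or.inr (hpS hpQ)
      · exact Or.inl hpQ
  -- the composed map and its pushforward
  set G : ℝ × ℝ → ℝ × ℝ := fun p => hinv (g p) with hG
  have hGm : Measurable G := hinvm.comp hgm
  have hGQd : ∀ p, G p ∈ Qd := fun p => hinvQd (g p)
  have hGmap : ∀ B : Set (ℝ × ℝ), MeasurableSet B → ν (G ⁻¹' B) = μ B := by
    intro B hB
    have h1 : ν (G ⁻¹' B) = volume (hinv ⁻¹' B ∩ Set.Ici 0) := hgmap _ (hinvm hB)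
    rw [h1, hinvpre B]
    have h2 : volume (((h '' (S ∩ B)) ∪
        (Tᶜ ∩ (if ((1:ℝ),(1:ℝ)) ∈ B then Set.univ else ∅))) ∩ Set.Ici 0) =
        volume (h '' (S ∩ B)) := by
      rw [union_inter_distrib_right]
      refine le_antisymm ((measure_union_le _ _).trans ?_) (measure_mono ?_)
      · have hj : volume ((Tᶜ ∩ (if ((1:ℝ),(1:ℝ)) ∈ B then Set.univ else ∅)) ∩ Set.Ici 0) = 0 := by
          refine measure_mono_null ?_ hTconull
          intro y hy
          exact ⟨hy.1.1, hy.2⟩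
        rw [hj, add_zero]
        exact measure_mono inter_subset_left
      · intro y hy
        have hyT : y ∈ T := by rcases hy with ⟨p, hp, rfl⟩; exact ⟨⟨p, hp.1⟩, rfl⟩
        exact mem_union_left _ ⟨hy, hTIci hyT⟩
    rw [h2]
    have h3 : volume (h '' (S ∩ B)) = μ (h ⁻¹' (h '' (S ∩ B))) := by
      rw [hhmap _ (himgm B hB)]
      congr 1
      refine (inter_eq_self_of_subset_left ?_).symm
      rintro y ⟨p, hp, rfl⟩
      exact hTIci ⟨⟨p, hp.1⟩, rfl⟩
    rw [h3]
    have hnull : μ (Qdᶜ ∪ Nh) = 0 := measure_union_null hμsupp hNhnull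
    have h4 : μ (h ⁻¹' (h '' (S ∩ B))) = μ (S ∩ B) := by
      refine le_antisymm ?_ (measure_mono (subset_preimage_image h (S ∩ B)))
      have hsub : h ⁻¹' (h '' (S ∩ B)) ⊆ (S ∩ B) ∪ (Qdᶜ ∪ Nh) := by
        rintro p ⟨x, hx, hxp⟩
        by_cases hpS : p ∈ S
        · have : x = p := hhinj hx.1 hpS hxp
          exact Or.inl (this ▸ hx)
        · right
          rw [hS] at hpS
          simp only [mem_diff, not_and, not_not] at hpS
          by_cases hpQ : p ∈ Qd
          · exact Or.inr (hpS hpQ)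
          · exact Or.inl hpQ
      calc μ (h ⁻¹' (h '' (S ∩ B))) ≤ μ ((S ∩ B) ∪ (Qdᶜ ∪ Nh)) := measure_mono hsub
        _ ≤ μ (S ∩ B) + μ (Qdᶜ ∪ Nh) := measure_union_le _ _
        _ = μ (S ∩ B) := by rw [hnull, add_zero]
    rw [h4]
    refine le_antisymm (measure_mono inter_subset_right) ?_
    have hsub : B ⊆ (S ∩ B) ∪ (Qdᶜ ∪ Nh) := by
      intro p hp
      by_cases hpS : p ∈ S
      · exact Or.inl ⟨hpS, hp⟩
      · right
        rw [hS] at hpS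
        simp only [mem_diff, not_and, not_not] at hpS
        by_cases hpQ : p ∈ Qd
        · exact Or.inr (hpS hpQ)
        · exact Or.inl hpQ
    calc μ B ≤ μ ((S ∩ B) ∪ (Qdᶜ ∪ Nh)) := measure_mono hsub
      _ ≤ μ (S ∩ B) + μ (Qdᶜ ∪ Nh) := measure_union_le _ _
      _ = μ (S ∩ B) := by rw [hnull, add_zero]
  -- injectivity of G off a null set
  set NG : Set (ℝ × ℝ) := (Ng ∪ g ⁻¹' Tᶜ) ∩ Qd with hNG
  have hNGm : MeasurableSet NG := (hNgm.union (hgm hTm.compl)).inter hQdm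
  have hNGnull : ν NG = 0 := by
    refine measure_mono_null inter_subset_left (measure_union_null hNgnull ?_)
    rw [hgmap _ hTm.compl]
    exact hTconull
  have hkeyNG : ∀ r ∈ Qd \ NG, r ∉ Ng ∧ g r ∈ T := by
    intro r hr
    have h2 := hr.2
    rw [hNG] at h2
    simp only [mem_inter_iff, mem_union, mem_preimage, mem_compl_iff] at h2
    constructor
    · intro hrN
      exact h2 ⟨Or.inl hrN, hr.1⟩
    · by_contra hgT
      exact h2 ⟨Or.inr hgT, hr.1⟩
  have hGinj : Set.InjOn G (Qd \ NG) := by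
    intro p hp p' hp' heq
    obtain ⟨hpN, hpT⟩ := hkeyNG p hp
    obtain ⟨hp'N, hp'T⟩ := hkeyNG p' hp'
    have e1 : h (G p) = g p := (hinvT _ hpT).1
    have e2 : h (G p') = g p' := (hinvT _ hp'T).1
    have hgeq : g p = g p' := by rw [← e1, ← e2, heq]
    exact hginj ⟨hp.1, hpN⟩ ⟨hp'.1, hp'N⟩ hgeq
  -- a null uncountable set inside the quadrant
  obtain ⟨x₀, hx₀I, hx₀null⟩ : ∃ x₀ : ℝ, x₀ ∈ Set.Ioo (1:ℝ) 2 ∧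
      μ ({x₀} ×ˢ Set.Ioo (1:ℝ) 2) = 0 := by
    by_contra hcon
    push_neg at hcon
    have hdisj' : Pairwise (Function.onFun (AEDisjoint μ)
        fun x : ℝ => ({x} ×ˢ Set.Ioo (1:ℝ) 2 : Set (ℝ × ℝ))) := by
      intro x y hxy
      refine Disjoint.aedisjoint (Set.disjoint_left.mpr ?_)
      rintro ⟨a, b⟩ ⟨ha, hb⟩ ⟨ha', hb'⟩
      simp only [mem_singleton_iff] at ha ha'
      exact hxy (ha.symm.trans ha')
    have hcnt : Set.Countable {x : ℝ | 0 < μ (({x} ×ˢ Set.Ioo (1:ℝ) 2 : Set (ℝ × ℝ)))} :=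
      Measure.countable_meas_pos_of_disjoint_iUnion₀ (μ := μ)
        (As := fun x : ℝ => ({x} ×ˢ Set.Ioo (1:ℝ) 2 : Set (ℝ × ℝ)))
        (fun x => ((measurableSet_singleton x).prod measurableSet_Ioo).nullMeasurableSet) hdisj'
    have hsub : Set.Ioo (1:ℝ) 2 ⊆ {x : ℝ | 0 < μ (({x} ×ˢ Set.Ioo (1:ℝ) 2 : Set (ℝ × ℝ)))} := by
      intro x hx
      have := hcon x hx
      exact pos_iff_ne_zero.mpr this
    have : volume (Set.Ioo (1:ℝ) 2) = 0 := measure_mono_null hsub (hcnt.measure_zero volume)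
    rw [Real.volume_Ioo] at this
    norm_num at this
  set M : Set (ℝ × ℝ) := {x₀} ×ˢ Set.Ioo (1:ℝ) 2 with hM
  have hMm : MeasurableSet M := (measurableSet_singleton x₀).prod measurableSet_Ioo
  have hMQd : M ⊆ Qd := by
    rintro ⟨a, b⟩ ⟨ha, hb⟩
    simp only [mem_singleton_iff] at ha
    refine ⟨?_, ?_⟩
    · simp only [mem_Ioi]; rw [ha]; linarith [hx₀I.1]
    · simp only [mem_Ioi]; linarith [hb.1]
  -- an injective measurable map into M
  haveI : StandardBorelSpace ↥(Set.Ioo (1:ℝ) 2) := (measurableSet_Ioo).standardBorel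
  have hIoo_unc : ¬Countable ↥(Set.Ioo (1:ℝ) 2) := by
    intro hcnt
    have : volume (Set.Ioo (1:ℝ) 2) = 0 :=
      (Set.countable_coe_iff.mp hcnt).measure_zero volume
    rw [Real.volume_Ioo] at this
    norm_num at this
  set e₂ : (ℝ × ℝ) ≃ᵐ ↥(Set.Ioo (1:ℝ) 2) :=
    PolishSpace.measurableEquivOfNotCountable (by exact not_countable) hIoo_unc with he₂
  set ψ : ℝ × ℝ → ℝ × ℝ := fun p => (x₀, ↑(e₂ p)) with hψ
  have hψm : Measurable ψ :=
    measurable_const.prodMk (measurable_subtype_coe.comp e₂.measurable)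
  have hψinj : Function.Injective ψ := by
    intro p p' hpp'
    have := (Prod.ext_iff.mp hpp').2
    exact e₂.injective (Subtype.ext this)
  have hψM : ∀ p, ψ p ∈ M := fun p => ⟨rfl, (e₂ p).2⟩
  -- the final map
  set NF : Set (ℝ × ℝ) := (NG ∪ G ⁻¹' M) ∩ Qd with hNF
  have hNFm : MeasurableSet NF := (hNGm.union (hGm hMm)).inter hQdm
  have hNFnull : ν NF = 0 := by
    refine measure_mono_null inter_subset_left (measure_union_null hNGnull ?_)
    rw [hGmap M hMm]
    exact hx₀null
  set F : ℝ × ℝ → ℝ × ℝ := fun p => if p ∈ NF then ψ p else G p with hF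
  have hFm : Measurable F := Measurable.ite hNFm hψm hGm
  refine ⟨F, hFm, ?_, ?_, ?_⟩
  · -- injectivity on the quadrant
    intro p hp p' hp' heq
    simp only [hF] at heq
    by_cases h1 : p ∈ NF <;> by_cases h2 : p' ∈ NF
    · rw [if_pos h1, if_pos h2] at heq
      exact hψinj heq
    · rw [if_pos h1, if_neg h2] at heq
      have hGM : G p' ∉ M := by
        intro hmem
        exact h2 (by rw [hNF]; exact ⟨Or.inr hmem, hp'⟩)
      exact absurd (heq ▸ hψM p) hGM
    · rw [if_neg h1, if_pos h2] at heq
      have hGM : G p ∉ M := by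
        intro hmem
        exact h1 (by rw [hNF]; exact ⟨Or.inr hmem, hp⟩)
      exact absurd (heq.symm ▸ hψM p') hGM
    · rw [if_neg h1, if_neg h2] at heq
      have hpD : p ∈ Qd \ NG := ⟨hp, fun hN => h1 (by rw [hNF]; exact ⟨Or.inl hN, hp⟩)⟩
      have hp'D : p' ∈ Qd \ NG := ⟨hp', fun hN => h2 (by rw [hNF]; exact ⟨Or.inl hN, hp'⟩)⟩
      exact hGinj hpD hp'D heq
  · -- maps the quadrant into itself
    intro p hp
    simp only [hF]
    split_ifs with h1
    · exact hMQd (hψM p)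
    · exact hGQd p
  · -- the pushforward property
    intro B hB
    have h1 : F ⁻¹' B \ NF = G ⁻¹' B \ NF := by
      ext p
      simp only [hF, mem_diff, mem_preimage]
      constructor
      · rintro ⟨hpB, hpN⟩
        rw [if_neg hpN] at hpB
        exact ⟨hpB, hpN⟩
      · rintro ⟨hpB, hpN⟩
        rw [if_neg hpN]
        exact ⟨hpB, hpN⟩
    calc ν (F ⁻¹' B) = ν (F ⁻¹' B \ NF) := (measure_diff_null hNFnull).symm
      _ = ν (G ⁻¹' B \ NF) := by rw [h1]
      _ = ν (G ⁻¹' B) := measure_diff_null hNFnull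
      _ = μ B := hGmap B hB
end
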